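/- In any simple graph G, the number of subgraphs isomorphic to the path P₄ on 4 vertices equals m₃ + m - n⟨k²⟩, where m₃ = ∑_{s<t} (A³)_{st} is the sum of the strictly upper-triangular entries of the cube of the adjacency matrix. -/

import Mathlib

open Finset BigOperators SimpleGraph

namespace CrossVar

variable {V : Type} [Fintype V] [DecidableEq V]

/-- Adjacency indicator `a_{xy}`. -/
def a (G : SimpleGraph V) [DecidableRel G.Adj] (x y : V) : ℚ := if G.Adj x y then 1 else 0

/-- Degree `k_v` as a rational number. -/
def deg (G : SimpleGraph V) [DecidableRel G.Adj] (v : V) : ℚ := (G.degree v : ℚ)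

/-- Sum over the set `Q` of unordered pairs `{st, uv}` of vertex-disjoint (independent) edges of
`G` of a function `f s t u v` (intended to be invariant under `s ↔ t`, `u ↔ v` and
`(s,t) ↔ (u,v)`).  Each unordered pair of independent edges corresponds to exactly `8` ordered
tuples `(s,t,u,v)`, whence the division by `8`. -/
def Qsum (G : SimpleGraph V) [DecidableRel G.Adj] (f : V → V → V → V → ℚ) : ℚ :=
  (∑ s, ∑ t, ∑ u, ∑ v,
    if G.Adj s t ∧ G.Adj u v ∧ s ≠ u ∧ s ≠ v ∧ t ≠ u ∧ t ≠ v then f s t u v else 0) / 8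

/-- Sum over the unordered edges `{s,t} ∈ E` of `f s t` (intended for symmetric `f`);
each unordered edge corresponds to two ordered adjacent pairs, whence the division by `2`. -/
def edgeSum (G : SimpleGraph V) [DecidableRel G.Adj] (f : V → V → ℚ) : ℚ :=
  (∑ s, ∑ t, if G.Adj s t then f s t else 0) / 2

/-- The number of subgraphs of `G` isomorphic to `F` (each unlabeled copy counted once). -/
noncomputable def copyCount {α : Type} (G : SimpleGraph V) (F : SimpleGraph α) : ℕ :=
  Nat.card {H : G.Subgraph // Nonempty (H.coe ≃g F)}

/-- `ξ(v)`: the sum of the degrees of the neighbours of `v`. -/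
def xi (G : SimpleGraph V) [DecidableRel G.Adj] (v : V) : ℚ :=
  ∑ u ∈ G.neighborFinset v, deg G u

/-- The paw graph: a triangle `{0,1,2}` with a pendant edge `{2,3}`. -/
def pawGraph : SimpleGraph (Fin 4) :=
  SimpleGraph.fromRel (fun x y => (x, y) ∈ [((0 : Fin 4), (1 : Fin 4)), (0, 2), (1, 2), (2, 3)])

/-- `C₃ ⊕ P₂`: the disjoint union of a triangle `{0,1,2}` and an edge `{3,4}`. -/
def triEdgeGraph : SimpleGraph (Fin 5) :=
  SimpleGraph.fromRel (fun x y => (x, y) ∈ [((0 : Fin 5), (1 : Fin 5)), (0, 2), (1, 2), (3, 4)])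

set_option linter.unusedSectionVars false
set_option linter.unreachableTactic false
set_option linter.unusedTactic false
set_option linter.unnecessarySeqFocus false

def pathRel (s x y t : V) : V → V → Prop := fun a b =>
  (a = s ∧ b = x) ∨ (a = x ∧ b = s) ∨ (a = x ∧ b = y) ∨ (a = y ∧ b = x) ∨
  (a = y ∧ b = t) ∨ (a = t ∧ b = y)

section
variable {s x y t : V}

def quadEquiv (hsx : s ≠ x) (hsy : s ≠ y) (hst : s ≠ t) (hxy : x ≠ y) (hxt : x ≠ t)
    (hyt : y ≠ t) : ({s, x, y, t} : Set V) ≃ Fin 4 where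
  toFun v := if v = s then 0 else if v = x then 1 else if v = y then 2 else 3
  invFun i := ![⟨s, Or.inl rfl⟩, ⟨x, Or.inr (Or.inl rfl)⟩, ⟨y, Or.inr (Or.inr (Or.inl rfl))⟩,
    ⟨t, Or.inr (Or.inr (Or.inr rfl))⟩] i
  left_inv := by
    rintro ⟨v, hv⟩
    simp only [Set.mem_insert_iff, Set.mem_singleton_iff] at hv
    obtain rfl|rfl|rfl|rfl := hv <;>
      simp [hsx.symm, hsy.symm, hst.symm, hxy.symm, hxt.symm, hyt.symm]
  right_inv := by
    intro i
    fin_cases i <;>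
      simp [hsx.symm, hsy.symm, hst.symm, hxy.symm, hxt.symm, hyt.symm]

def pathSub (G : SimpleGraph V) (s x y t : V)
    (h1 : G.Adj s x) (h2 : G.Adj x y) (h3 : G.Adj y t) : G.Subgraph where
  verts := {s, x, y, t}
  Adj := pathRel s x y t
  adj_sub := by
    rintro a b (⟨rfl, rfl⟩|⟨rfl, rfl⟩|⟨rfl, rfl⟩|⟨rfl, rfl⟩|⟨rfl, rfl⟩|⟨rfl, rfl⟩)
    · exact h1
    · exact h1.symm
    · exact h2
    · exact h2.symm
    · exact h3
    · exact h3.symm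
  edge_vert := by
    rintro a b (⟨rfl, rfl⟩|⟨rfl, rfl⟩|⟨rfl, rfl⟩|⟨rfl, rfl⟩|⟨rfl, rfl⟩|⟨rfl, rfl⟩) <;>
      simp [pathRel]
  symm := ⟨by
    rintro a b (⟨rfl, rfl⟩|⟨rfl, rfl⟩|⟨rfl, rfl⟩|⟨rfl, rfl⟩|⟨rfl, rfl⟩|⟨rfl, rfl⟩) <;>
      simp [pathRel]⟩

def pathIso (G : SimpleGraph V) (h1 : G.Adj s x) (h2 : G.Adj x y) (h3 : G.Adj y t)
    (hsx : s ≠ x) (hsy : s ≠ y) (hst : s ≠ t) (hxy : x ≠ y) (hxt : x ≠ t) (hyt : y ≠ t) :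
    (pathSub G s x y t h1 h2 h3).coe ≃g pathGraph 4 where
  toEquiv := quadEquiv hsx hsy hst hxy hxt hyt
  map_rel_iff' := by
    rintro ⟨a, ha⟩ ⟨b, hb⟩
    simp only [pathSub, Set.mem_insert_iff, Set.mem_singleton_iff] at ha hb
    obtain rfl|rfl|rfl|rfl := ha <;> obtain rfl|rfl|rfl|rfl := hb <;>
      simp [quadEquiv, pathGraph_adj, pathSub, pathRel, Subgraph.coe_adj,
        hsx, hsy, hst, hxy, hxt, hyt, hsx.symm, hsy.symm, hst.symm, hxy.symm, hxt.symm,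
        hyt.symm] <;>
      simp [DFunLike.coe, EquivLike.coe, hsx, hsy, hst, hxy, hxt, hyt, hsx.symm, hsy.symm,
        hst.symm, hxy.symm, hxt.symm, hyt.symm] <;> decide

lemma pathSub_rev (G : SimpleGraph V) (h1 : G.Adj s x) (h2 : G.Adj x y) (h3 : G.Adj y t) :
    pathSub G t y x s h3.symm h2.symm h1.symm = pathSub G s x y t h1 h2 h3 := by
  ext a b
  · simp [pathSub]; tauto
  · simp [pathSub, pathRel]; tauto

end

lemma pg_adj {i j : Fin 4} (h : i.val + 1 = j.val ∨ j.val + 1 = i.val) :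
    (pathGraph 4).Adj i j := pathGraph_adj.mpr h

section
variable {G : SimpleGraph V} {H : G.Subgraph}

def vi (e : H.coe ≃g pathGraph 4) (i : Fin 4) : V := (e.symm i : V)

lemma vi_inj (e : H.coe ≃g pathGraph 4) {i j : Fin 4} (h : i ≠ j) : vi e i ≠ vi e j := by
  intro hc
  exact h (e.symm.injective (Subtype.ext hc))

lemma adj_vi (e : H.coe ≃g pathGraph 4) {i j : Fin 4} (hij : (pathGraph 4).Adj i j) :
    H.Adj (vi e i) (vi e j) := by
  have := e.symm.map_rel_iff.2 hij
  exact this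

lemma hAdj_iff (e : H.coe ≃g pathGraph 4) (a b : V) :
    H.Adj a b ↔ pathRel (vi e 0) (vi e 1) (vi e 2) (vi e 3) a b := by
  constructor
  · intro hab
    have ha : a ∈ H.verts := H.edge_vert hab
    have hb : b ∈ H.verts := H.edge_vert (H.adj_symm hab)
    have hab' : H.coe.Adj ⟨a, ha⟩ ⟨b, hb⟩ := hab
    have hP : (pathGraph 4).Adj (e ⟨a, ha⟩) (e ⟨b, hb⟩) := e.map_rel_iff.2 hab'
    have ea : a = vi e (e ⟨a, ha⟩) := by simp [vi]
    have eb : b = vi e (e ⟨b, hb⟩) := by simp [vi]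
    revert hP ea eb
    generalize e ⟨a, ha⟩ = i
    generalize e ⟨b, hb⟩ = j
    intro hP ea eb
    subst ea; subst eb
    fin_cases i <;> fin_cases j <;> simp [pathGraph_adj] at hP ⊢ <;>
      simp [pathRel] <;> omega
  · rintro (⟨rfl, rfl⟩|⟨rfl, rfl⟩|⟨rfl, rfl⟩|⟨rfl, rfl⟩|⟨rfl, rfl⟩|⟨rfl, rfl⟩)
    · exact adj_vi e (pg_adj (by omega))
    · exact H.adj_symm (adj_vi e (pg_adj (by omega)))
    · exact adj_vi e (pg_adj (by omega))
    · exact H.adj_symm (adj_vi e (pg_adj (by omega)))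
    · exact adj_vi e (pg_adj (by omega))
    · exact H.adj_symm (adj_vi e (pg_adj (by omega)))

lemma verts_eq (e : H.coe ≃g pathGraph 4) :
    H.verts = {vi e 0, vi e 1, vi e 2, vi e 3} := by
  ext v
  constructor
  · intro hv
    have : (⟨v, hv⟩ : H.verts) = e.symm (e ⟨v, hv⟩) := (e.symm_apply_apply _).symm
    have hv' : v = vi e (e ⟨v, hv⟩) := congrArg Subtype.val this
    revert hv'
    generalize e ⟨v, hv⟩ = i
    intro hv'
    fin_cases i <;> simp [hv']
  · intro hv
    simp only [Set.mem_insert_iff, Set.mem_singleton_iff] at hv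
    obtain rfl|rfl|rfl|rfl := hv <;> exact (e.symm _).2

lemma H_eq (e : H.coe ≃g pathGraph 4) :
    H = pathSub G (vi e 0) (vi e 1) (vi e 2) (vi e 3)
      ((adj_vi e (pg_adj (by omega))).adj_sub) ((adj_vi e (pg_adj (by omega))).adj_sub)
      ((adj_vi e (pg_adj (by omega))).adj_sub) := by
  ext a b
  · rw [verts_eq e]; rfl
  · rw [hAdj_iff e]; rfl

end

set_option maxHeartbeats 1000000 in
lemma pathRel_inj [LinearOrder V] {s x y t s' x' y' t' : V}
    (hsx : s ≠ x) (hsy : s ≠ y) (hxy : x ≠ y) (hxt : x ≠ t) (hyt : y ≠ t)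
    (hsx' : s' ≠ x') (hsy' : s' ≠ y') (hxy' : x' ≠ y') (hxt' : x' ≠ t') (hyt' : y' ≠ t')
    (hst : s < t) (hst' : s' < t')
    (h : pathRel s x y t = pathRel s' x' y' t') :
    s' = s ∧ x' = x ∧ y' = y ∧ t' = t := by
  have e1 : (s' = s ∧ x' = x) ∨ (s' = x ∧ x' = s) ∨ (s' = x ∧ x' = y) ∨ (s' = y ∧ x' = x) ∨
      (s' = y ∧ x' = t) ∨ (s' = t ∧ x' = y) :=
    (congrFun (congrFun h.symm s') x').mp (Or.inl ⟨rfl, rfl⟩)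
  have e2 : (x' = s ∧ y' = x) ∨ (x' = x ∧ y' = s) ∨ (x' = x ∧ y' = y) ∨ (x' = y ∧ y' = x) ∨
      (x' = y ∧ y' = t) ∨ (x' = t ∧ y' = y) :=
    (congrFun (congrFun h.symm x') y').mp (Or.inr (Or.inr (Or.inl ⟨rfl, rfl⟩)))
  have e3 : (y' = s ∧ t' = x) ∨ (y' = x ∧ t' = s) ∨ (y' = x ∧ t' = y) ∨ (y' = y ∧ t' = x) ∨
      (y' = y ∧ t' = t) ∨ (y' = t ∧ t' = y) :=
    (congrFun (congrFun h.symm y') t').mp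
      (Or.inr (Or.inr (Or.inr (Or.inr (Or.inl ⟨rfl, rfl⟩)))))
  clear h
  obtain ⟨rfl,rfl⟩|⟨rfl,rfl⟩|⟨rfl,rfl⟩|⟨rfl,rfl⟩|⟨rfl,rfl⟩|⟨rfl,rfl⟩ := e1 <;>
    obtain ⟨h2a,h2b⟩|⟨h2a,h2b⟩|⟨h2a,h2b⟩|⟨h2a,h2b⟩|⟨h2a,h2b⟩|⟨h2a,h2b⟩ := e2 <;>
    obtain ⟨h3a,h3b⟩|⟨h3a,h3b⟩|⟨h3a,h3b⟩|⟨h3a,h3b⟩|⟨h3a,h3b⟩|⟨h3a,h3b⟩ := e3 <;>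
    subst_vars <;> simp_all <;>
    first
      | rfl
      | exact absurd hst' (lt_asymm hst)
      | exact absurd hst (lt_asymm hst')


variable (G : SimpleGraph V) [DecidableRel G.Adj]

lemma a_symm (s t : V) : a G s t = a G t s := by simp [a, G.adj_comm]

lemma a_self (s : V) : a G s s = 0 := by simp [a]

lemma a_mul_self (s t : V) : a G s t * a G s t = a G s t := by
  unfold a; split_ifs <;> norm_num

lemma sum_a_right (s : V) : ∑ x, a G s x = deg G s := by
  simp [a, Finset.sum_boole, deg, SimpleGraph.degree, SimpleGraph.neighborFinset_eq_filter]

lemma sum_a_left (t : V) : ∑ x, a G x t = deg G t := by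
  simp only [fun x => a_symm G x t]
  exact sum_a_right G t

lemma sum_deg : ∑ v, deg G v = 2 * (G.edgeFinset.card : ℚ) := by
  have := G.sum_degrees_eq_twice_card_edges
  have : ((∑ v, G.degree v : ℕ) : ℚ) = ((2 * G.edgeFinset.card : ℕ) : ℚ) := by rw [this]
  push_cast at this
  simpa [deg] using this

lemma sum_filter_lt [LinearOrder V] (f : V → V → ℚ) (hsymm : ∀ s t, f s t = f t s)
    (hdiag : ∀ s, f s s = 0) :
    ∑ p ∈ Finset.univ.filter (fun p : V × V => p.1 < p.2), f p.1 p.2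
      = (∑ s, ∑ t, f s t) / 2 := by
  have hswap : ∑ p ∈ Finset.univ.filter (fun p : V × V => p.1 < p.2), f p.1 p.2
      = ∑ p ∈ Finset.univ.filter (fun p : V × V => p.2 < p.1), f p.1 p.2 := by
    refine Finset.sum_equiv (Equiv.prodComm V V) ?_ ?_
    · intro p; simp
    · intro p hp; exact hsymm p.1 p.2
  have htot : (∑ s, ∑ t, f s t)
      = ∑ p ∈ Finset.univ.filter (fun p : V × V => p.1 < p.2), f p.1 p.2
        + ∑ p ∈ Finset.univ.filter (fun p : V × V => ¬ p.1 < p.2), f p.1 p.2 := by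
    rw [Finset.sum_filter_add_sum_filter_not]
    exact (Fintype.sum_prod_type (fun p : V × V => f p.1 p.2)).symm
  have hsplit2 : ∑ p ∈ Finset.univ.filter (fun p : V × V => ¬ p.1 < p.2), f p.1 p.2
      = ∑ p ∈ Finset.univ.filter (fun p : V × V => p.2 < p.1), f p.1 p.2 := by
    rw [← Finset.sum_filter_add_sum_filter_not
      (Finset.univ.filter (fun p : V × V => ¬ p.1 < p.2)) (fun p => p.1 = p.2)]
    rw [Finset.filter_filter, Finset.filter_filter]
    have h1 : ∑ p ∈ Finset.univ.filter (fun p : V × V => ¬ p.1 < p.2 ∧ p.1 = p.2),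
        f p.1 p.2 = 0 := by
      apply Finset.sum_eq_zero
      intro p hp
      simp only [Finset.mem_filter] at hp
      rw [hp.2.2, hdiag]
    have h2 : Finset.univ.filter (fun p : V × V => ¬ p.1 < p.2 ∧ ¬ p.1 = p.2)
        = Finset.univ.filter (fun p : V × V => p.2 < p.1) := by
      apply Finset.filter_congr
      intro p _
      constructor
      · rintro ⟨hle, hne⟩
        exact lt_of_le_of_ne (not_lt.1 hle) (fun h => hne h.symm)
      · intro h
        exact ⟨not_lt.2 h.le, fun he => absurd (he ▸ h) (lt_irrefl _)⟩
    rw [h1, h2]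
    ring
  rw [htot, hsplit2, ← hswap]
  ring

lemma pointwise (s t x y : V) :
    a G s x * a G x y * a G y t
      = (if G.Adj s x ∧ G.Adj x y ∧ G.Adj y t ∧ x ≠ t ∧ y ≠ s then (1 : ℚ) else 0)
        + (if y = s then (1 : ℚ) else 0) * (a G s x * a G s t)
        + (if x = t then (1 : ℚ) else 0)
            * ((1 - if y = s then (1 : ℚ) else 0) * (a G s t * a G y t)) := by
  rcases eq_or_ne y s with rfl | hy <;> rcases eq_or_ne x t with rfl | hx <;>
    unfold a <;> split_ifs <;> simp_all [G.adj_comm] <;> ring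

lemma key (s t : V) :
    ∑ x, ∑ y, a G s x * a G x y * a G y t
      = (∑ x, ∑ y, if G.Adj s x ∧ G.Adj x y ∧ G.Adj y t ∧ x ≠ t ∧ y ≠ s then (1 : ℚ) else 0)
        + a G s t * (deg G s + deg G t - 1) := by
  have h1 : ∑ x, ∑ y, (if y = s then (1 : ℚ) else 0) * (a G s x * a G s t)
      = deg G s * a G s t := by
    have : ∀ x : V, ∑ y, (if y = s then (1 : ℚ) else 0) * (a G s x * a G s t)
        = a G s x * a G s t := by
      intro x
      rw [Finset.sum_eq_single s]
      · simp
      · intro b _ hb; simp [hb]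
      · simp
    simp only [this]
    rw [← Finset.sum_mul, sum_a_right]
  have h2 : ∑ x, ∑ y, (if x = t then (1 : ℚ) else 0)
        * ((1 - if y = s then (1 : ℚ) else 0) * (a G s t * a G y t))
      = a G s t * deg G t - a G s t := by
    rw [Finset.sum_eq_single t]
    · simp only [eq_self_iff_true, if_true, one_mul]
      have : ∑ y, (1 - if y = s then (1 : ℚ) else 0) * (a G s t * a G y t)
          = ∑ y, a G s t * a G y t - ∑ y, (if y = s then (1 : ℚ) else 0) * (a G s t * a G y t) := by
        rw [← Finset.sum_sub_distrib]
        apply Finset.sum_congr rfl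
        intro y _
        ring
      rw [this]
      have hA : ∑ y, a G s t * a G y t = a G s t * deg G t := by
        rw [← Finset.mul_sum, sum_a_left]
      have hB : ∑ y, (if y = s then (1 : ℚ) else 0) * (a G s t * a G y t) = a G s t := by
        rw [Finset.sum_eq_single s]
        · rw [if_pos rfl, one_mul, a_mul_self]
        · intro b _ hb; simp [hb]
        · simp
      rw [hA, hB]
    · intro b _ hb; simp [hb]
    · simp
  calc ∑ x, ∑ y, a G s x * a G x y * a G y t
      = ∑ x, ∑ y, ((if G.Adj s x ∧ G.Adj x y ∧ G.Adj y t ∧ x ≠ t ∧ y ≠ s then (1 : ℚ) else 0)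
        + (if y = s then (1 : ℚ) else 0) * (a G s x * a G s t)
        + (if x = t then (1 : ℚ) else 0)
            * ((1 - if y = s then (1 : ℚ) else 0) * (a G s t * a G y t))) := by
        apply Finset.sum_congr rfl; intro x _; apply Finset.sum_congr rfl; intro y _
        exact pointwise G s t x y
    _ = (∑ x, ∑ y, if G.Adj s x ∧ G.Adj x y ∧ G.Adj y t ∧ x ≠ t ∧ y ≠ s then (1 : ℚ) else 0)
        + (∑ x, ∑ y, (if y = s then (1 : ℚ) else 0) * (a G s x * a G s t))
        + (∑ x, ∑ y, (if x = t then (1 : ℚ) else 0)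
            * ((1 - if y = s then (1 : ℚ) else 0) * (a G s t * a G y t))) := by
        simp only [Finset.sum_add_distrib]
    _ = (∑ x, ∑ y, if G.Adj s x ∧ G.Adj x y ∧ G.Adj y t ∧ x ≠ t ∧ y ≠ s then (1 : ℚ) else 0)
        + a G s t * (deg G s + deg G t - 1) := by
        rw [h1, h2]; ring

def quadP (G : SimpleGraph V) [DecidableRel G.Adj] [LinearOrder V] (q : V × V × V × V) :
    Prop :=
  G.Adj q.1 q.2.1 ∧ G.Adj q.2.1 q.2.2.1 ∧ G.Adj q.2.2.1 q.2.2.2 ∧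
    q.2.1 ≠ q.2.2.2 ∧ q.2.2.1 ≠ q.1 ∧ q.1 < q.2.2.2

instance [LinearOrder V] : DecidablePred (quadP G) := fun q => by
  unfold quadP; infer_instance

lemma pow3 (s t : V) :
    ((G.adjMatrix ℚ) ^ 3) s t = ∑ x, ∑ y, a G s x * a G x y * a G y t := by
  have h3 : (G.adjMatrix ℚ) ^ 3 = (G.adjMatrix ℚ) * (G.adjMatrix ℚ) * (G.adjMatrix ℚ) := by
    rw [pow_succ, pow_two]
  rw [h3, Matrix.mul_apply]
  have : ∀ y : V, ((G.adjMatrix ℚ) * (G.adjMatrix ℚ)) s y * (G.adjMatrix ℚ) y t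
      = ∑ x, a G s x * a G x y * a G y t := by
    intro y
    rw [Matrix.mul_apply, Finset.sum_mul]
    apply Finset.sum_congr rfl
    intro x _
    simp [a]
  simp only [this]
  rw [Finset.sum_comm]

lemma card_quad [LinearOrder V] :
    ((Finset.univ.filter (quadP G)).card : ℚ)
      = ∑ p ∈ Finset.univ.filter (fun p : V × V => p.1 < p.2),
          ∑ x, ∑ y, if G.Adj p.1 x ∧ G.Adj x y ∧ G.Adj y p.2 ∧ x ≠ p.2 ∧ y ≠ p.1
            then (1 : ℚ) else 0 := by
  rw [Finset.sum_filter]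
  have hrhs : ∑ p : V × V, (if p.1 < p.2 then
        ∑ x, ∑ y, if G.Adj p.1 x ∧ G.Adj x y ∧ G.Adj y p.2 ∧ x ≠ p.2 ∧ y ≠ p.1
          then (1 : ℚ) else 0 else 0)
      = ∑ s, ∑ t, (if s < t then
        ∑ x, ∑ y, if G.Adj s x ∧ G.Adj x y ∧ G.Adj y t ∧ x ≠ t ∧ y ≠ s
          then (1 : ℚ) else 0 else 0) :=
    Fintype.sum_prod_type _
  rw [hrhs]
  have hlhs : ((Finset.univ.filter (quadP G)).card : ℚ)
      = ∑ q : V × V × V × V, if quadP G q then (1 : ℚ) else 0 := by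
    rw [Finset.sum_boole]
  rw [hlhs]
  rw [Fintype.sum_prod_type]
  have step : ∀ s : V, ∑ q : V × V × V, (if quadP G (s, q) then (1 : ℚ) else 0)
      = ∑ t, ∑ x, ∑ y, (if quadP G (s, x, y, t) then (1 : ℚ) else 0) := by
    intro s
    rw [Fintype.sum_prod_type]
    have : ∀ x : V, ∑ q : V × V, (if quadP G (s, x, q) then (1 : ℚ) else 0)
        = ∑ t, ∑ y, (if quadP G (s, x, y, t) then (1 : ℚ) else 0) := by
      intro x
      rw [Fintype.sum_prod_type]
      exact Finset.sum_comm
    simp only [this]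
    exact Finset.sum_comm
  simp only [step]
  apply Finset.sum_congr rfl
  intro s _
  apply Finset.sum_congr rfl
  intro t _
  by_cases hst : s < t
  · rw [if_pos hst]
    apply Finset.sum_congr rfl
    intro x _
    apply Finset.sum_congr rfl
    intro y _
    apply if_congr _ rfl rfl
    unfold quadP
    simp only []
    constructor
    · rintro ⟨h1, h2, h3, h4, h5, h6⟩; exact ⟨h1, h2, h3, h4, h5⟩
    · rintro ⟨h1, h2, h3, h4, h5⟩; exact ⟨h1, h2, h3, h4, h5, hst⟩
  · rw [if_neg hst]
    apply Finset.sum_eq_zero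
    intro x _
    apply Finset.sum_eq_zero
    intro y _
    rw [if_neg]
    unfold quadP
    simp only []
    rintro ⟨_, _, _, _, _, h6⟩
    exact hst h6

lemma copyCount_eq [LinearOrder V] (G : SimpleGraph V) [DecidableRel G.Adj] :
    copyCount G (pathGraph 4) = (univ.filter (quadP G)).card := by
  classical
  rw [copyCount, ← Fintype.card_subtype, ← Nat.card_eq_fintype_card]
  refine Nat.card_congr (Equiv.ofBijective ?_ ⟨?_, ?_⟩).symm
  · rintro ⟨⟨s, x, y, t⟩, h1, h2, h3, hxt, hys, hst⟩
    exact ⟨pathSub G s x y t h1 h2 h3,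
      ⟨pathIso G h1 h2 h3 h1.ne hys.symm hst.ne h2.ne hxt h3.ne⟩⟩
  · rintro ⟨⟨s, x, y, t⟩, h1, h2, h3, hxt, hys, hst⟩
      ⟨⟨s', x', y', t'⟩, h1', h2', h3', hxt', hys', hst'⟩ hF
    simp only [Subtype.mk.injEq] at hF
    have hrel : pathRel s x y t = pathRel s' x' y' t' := congrArg Subgraph.Adj hF
    obtain ⟨rfl, rfl, rfl, rfl⟩ := pathRel_inj h1'.ne hys'.symm h2'.ne hxt' h3'.ne
      h1.ne hys.symm h2.ne hxt h3.ne hst' hst hrel.symm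
    rfl
  · rintro ⟨H, hne⟩
    obtain ⟨e⟩ := hne
    have g1 : G.Adj (vi e 0) (vi e 1) :=
      (adj_vi e (pg_adj (Or.inl rfl) : (pathGraph 4).Adj 0 1)).adj_sub
    have g2 : G.Adj (vi e 1) (vi e 2) :=
      (adj_vi e (pg_adj (Or.inl rfl) : (pathGraph 4).Adj 1 2)).adj_sub
    have g3 : G.Adj (vi e 2) (vi e 3) :=
      (adj_vi e (pg_adj (Or.inl rfl) : (pathGraph 4).Adj 2 3)).adj_sub
    rcases lt_or_gt_of_ne (vi_inj e (show (0 : Fin 4) ≠ 3 by decide)) with hlt | hgt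
    · exact ⟨⟨(vi e 0, vi e 1, vi e 2, vi e 3), g1, g2, g3,
        vi_inj e (by decide), vi_inj e (by decide), hlt⟩, Subtype.ext (H_eq e).symm⟩
    · refine ⟨⟨(vi e 3, vi e 2, vi e 1, vi e 0), g3.symm, g2.symm, g1.symm,
        vi_inj e (by decide), vi_inj e (by decide), hgt⟩, ?_⟩
      refine Subtype.ext ?_
      show pathSub G (vi e 3) (vi e 2) (vi e 1) (vi e 0) g3.symm g2.symm g1.symm = H
      rw [pathSub_rev G g1 g2 g3]
      exact (H_eq e).symm


theorem stmt2 [LinearOrder V] (G : SimpleGraph V) [DecidableRel G.Adj] :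
    (copyCount G (pathGraph 4) : ℚ) =
      (∑ p ∈ Finset.univ.filter (fun p : V × V => p.1 < p.2), ((G.adjMatrix ℚ) ^ 3) p.1 p.2)
        + (G.edgeFinset.card : ℚ) - ∑ v, (deg G v) ^ 2 := by
  have hE : ∑ p ∈ Finset.univ.filter (fun p : V × V => p.1 < p.2), a G p.1 p.2
      = (G.edgeFinset.card : ℚ) := by
    rw [sum_filter_lt (fun s t => a G s t) (a_symm G) (a_self G)]
    have h1 : ∀ s : V, ∑ t, a G s t = deg G s := sum_a_right G
    simp only [h1]
    rw [sum_deg]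
    ring
  have hD : ∑ p ∈ Finset.univ.filter (fun p : V × V => p.1 < p.2),
        a G p.1 p.2 * (deg G p.1 + deg G p.2) = ∑ v, deg G v ^ 2 := by
    rw [sum_filter_lt (fun s t => a G s t * (deg G s + deg G t))
      (fun s t => by rw [a_symm]; ring) (fun s => by rw [a_self]; ring)]
    have hsplit : ∀ s : V, ∑ t, a G s t * (deg G s + deg G t)
        = (∑ t, a G s t * deg G s) + (∑ t, a G s t * deg G t) := by
      intro s
      rw [← Finset.sum_add_distrib]
      apply Finset.sum_congr rfl
      intro t _
      ring
    simp only [hsplit]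
    rw [Finset.sum_add_distrib]
    have e1 : ∑ s, ∑ t, a G s t * deg G s = ∑ s, deg G s ^ 2 := by
      apply Finset.sum_congr rfl
      intro s _
      rw [← Finset.sum_mul, sum_a_right]
      ring
    have e2 : ∑ s, ∑ t, a G s t * deg G t = ∑ t, deg G t ^ 2 := by
      rw [Finset.sum_comm]
      apply Finset.sum_congr rfl
      intro t _
      rw [← Finset.sum_mul, sum_a_left]
      ring
    rw [e1, e2]
    ring
  have hmain : ∑ p ∈ Finset.univ.filter (fun p : V × V => p.1 < p.2),
        ((G.adjMatrix ℚ) ^ 3) p.1 p.2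
      = ((Finset.univ.filter (quadP G)).card : ℚ)
        + (∑ v, deg G v ^ 2) - (G.edgeFinset.card : ℚ) := by
    have h1 : ∀ p ∈ Finset.univ.filter (fun p : V × V => p.1 < p.2),
        ((G.adjMatrix ℚ) ^ 3) p.1 p.2
          = (∑ x, ∑ y, if G.Adj p.1 x ∧ G.Adj x y ∧ G.Adj y p.2 ∧ x ≠ p.2 ∧ y ≠ p.1
              then (1 : ℚ) else 0)
            + (a G p.1 p.2 * (deg G p.1 + deg G p.2) - a G p.1 p.2) := by
      intro p _
      rw [pow3, key]
      ring
    rw [Finset.sum_congr rfl h1, Finset.sum_add_distrib, Finset.sum_sub_distrib,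
      ← card_quad, hE, hD]
    ring
  rw [copyCount_eq G, hmain]
  ring

end CrossVar
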